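/- Let H₀ ∈ B(𝓗) be self-adjoint with spectrum contained in [1,∞), let H₁ ∈ B(𝓗), and set C₁ := ‖H₁·(√H₀)⁻¹‖. Then for every δ ∈ (0,1) and every real C₂ > 0 with C₂ ≥ (C₁² − δ²)/δ², one has ‖H₁ψ‖ ≤ δ·‖H₀ψ‖ + δ·C₂·‖ψ‖ for every ψ ∈ 𝓗; in particular H₁ is H₀-bounded with relative bound δ for every δ ∈ (0,1). -/

import Mathlib

open MeasureTheory
open scoped ComplexInnerProductSpace
set_option synthInstance.maxHeartbeats 1000000
set_option maxHeartbeats 1000000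

variable {𝓗 : Type*} [NormedAddCommGroup 𝓗] [InnerProductSpace ℂ 𝓗] [CompleteSpace 𝓗]

private theorem stmt_4_arith (a b s C₁ δ C₂ L : ℝ) (ha : 0 ≤ a) (hb : 0 ≤ b)
    (hδ0 : 0 < δ) (hC2 : 0 < C₂)
    (h1 : s ^ 2 ≤ b * a) (h2 : b ^ 2 ≤ s ^ 2)
    (h3 : (C₁ ^ 2 - δ ^ 2) / δ ^ 2 ≤ C₂)
    (hL : L ≤ C₁ * s) :
    L ≤ δ * a + δ * C₂ * b := by
  have hδ2 : (0:ℝ) < δ ^ 2 := by positivity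
  have hC₁sq : C₁ ^ 2 ≤ δ ^ 2 + δ ^ 2 * C₂ := by
    rw [div_le_iff₀ hδ2] at h3; nlinarith
  have hba : b ≤ a := by nlinarith
  have e1 : C₁ ^ 2 * s ^ 2 ≤ (δ ^ 2 + δ ^ 2 * C₂) * s ^ 2 :=
    mul_le_mul_of_nonneg_right hC₁sq (sq_nonneg s)
  have e2 : (δ ^ 2 + δ ^ 2 * C₂) * s ^ 2 ≤ (δ ^ 2 + δ ^ 2 * C₂) * (b * a) :=
    mul_le_mul_of_nonneg_left h1 (by positivity)
  have hsq : (C₁ * s) ^ 2 ≤ (δ * a + δ * C₂ * b) ^ 2 := by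
    nlinarith [mul_nonneg (mul_nonneg hδ2.le ha) (sub_nonneg.mpr hba),
      mul_nonneg (mul_nonneg (mul_nonneg hδ2.le hC2.le) ha) hb,
      mul_nonneg (mul_nonneg (mul_nonneg hδ2.le (mul_nonneg hC2.le hC2.le)) hb) hb]
  have hrhs : 0 ≤ δ * a + δ * C₂ * b := by positivity
  calc L ≤ C₁ * s := hL
    _ ≤ δ * a + δ * C₂ * b :=
      le_of_pow_le_pow_left₀ two_ne_zero hrhs hsq

/-- For self-adjoint `H₀` with spectrum in `[1,∞)`, `H₁ ∈ B(𝓗)`, and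
`C₁ := ‖H₁·(√H₀)⁻¹‖`: for every `δ ∈ (0,1)` and every `C₂ > 0` with
`C₂ ≥ (C₁² − δ²)/δ²`, one has `‖H₁ψ‖ ≤ δ·‖H₀ψ‖ + δ·C₂·‖ψ‖` for every `ψ`. -/
theorem stmt_4 (H₀ H₁ : 𝓗 →L[ℂ] 𝓗) (hH₀ : IsSelfAdjoint H₀)
    (hspec : spectrum ℝ H₀ ⊆ Set.Ici 1)
    (C₁ : ℝ) (hC₁ : C₁ = ‖H₁ * Ring.inverse (CFC.sqrt H₀)‖)
    (δ : ℝ) (hδ : δ ∈ Set.Ioo (0 : ℝ) 1)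
    (C₂ : ℝ) (hC₂pos : 0 < C₂) (hC₂ : (C₁ ^ 2 - δ ^ 2) / δ ^ 2 ≤ C₂) :
    ∀ ψ : 𝓗, ‖H₁ ψ‖ ≤ δ * ‖H₀ ψ‖ + δ * C₂ * ‖ψ‖ := by
  intro ψ
  have hone : (1 : 𝓗 →L[ℂ] 𝓗) ≤ H₀ := by
    rw [CFC.one_le_iff (R := ℝ) H₀ hH₀]
    exact fun x hx => hspec hx
  have hnn : (0 : 𝓗 →L[ℂ] 𝓗) ≤ H₀ := le_trans zero_le_one hone
  set S := CFC.sqrt H₀ with hS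
  have hsq : S * S = H₀ := CFC.sqrt_mul_sqrt_self H₀ hnn
  have hsnn : (0 : 𝓗 →L[ℂ] 𝓗) ≤ S := CFC.sqrt_nonneg (a := H₀)
  have hSsa : IsSelfAdjoint S := IsSelfAdjoint.of_nonneg hsnn
  have hUnitH₀ : IsUnit H₀ := by
    apply spectrum.isUnit_of_zero_notMem (R := ℝ)
    intro h
    exact absurd (hspec h) (by norm_num)
  obtain ⟨u, hu⟩ := hUnitH₀
  have hcom : Commute (↑u : 𝓗 →L[ℂ] 𝓗) S := by
    rw [hu, ← hsq]; exact (Commute.refl S).mul_left (Commute.refl S)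
  have hcom' : Commute (↑u⁻¹ : 𝓗 →L[ℂ] 𝓗) S := hcom.units_inv_left
  have hSunit : IsUnit S := by
    refine ⟨⟨S, S * ↑u⁻¹, ?_, ?_⟩, rfl⟩
    · show S * (S * ↑u⁻¹) = 1
      rw [← mul_assoc, hsq, ← hu]; exact u.mul_inv
    · show (S * ↑u⁻¹) * S = 1
      rw [mul_assoc, hcom'.eq, ← mul_assoc, hsq, ← hu]; exact u.mul_inv
  have hinv : Ring.inverse S * S = 1 := Ring.inverse_mul_cancel S hSunit
  have happ : H₁ ψ = (H₁ * Ring.inverse S) (S ψ) := by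
    simp only [ContinuousLinearMap.mul_apply]
    rw [← ContinuousLinearMap.mul_apply (Ring.inverse S) S, hinv,
      ContinuousLinearMap.one_apply]
  have hsym : ∀ x y : 𝓗, ⟪S x, y⟫ = ⟪x, S y⟫ :=
    fun x y => (ContinuousLinearMap.isSelfAdjoint_iff_isSymmetric.mp hSsa) x y
  have hs2 : ‖S ψ‖ ^ 2 = RCLike.re ⟪ψ, H₀ ψ⟫ := by
    rw [← hsq, ContinuousLinearMap.mul_apply, ← hsym ψ (S ψ),
      inner_self_eq_norm_sq]
  have hb2 : ‖ψ‖ ^ 2 ≤ RCLike.re ⟪ψ, H₀ ψ⟫ := by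
    have hpos := (ContinuousLinearMap.le_def 1 H₀).mp hone
    have := hpos.inner_nonneg_right ψ
    simp only [ContinuousLinearMap.sub_apply, ContinuousLinearMap.one_apply,
      inner_sub_right, map_sub] at this
    have h' := (Complex.le_def.mp this).1
    simp only [Complex.zero_re, Complex.sub_re] at h'
    rw [← inner_self_eq_norm_sq (𝕜 := ℂ)]
    change (⟪ψ, ψ⟫).re ≤ (⟪ψ, H₀ ψ⟫).re
    linarith
  have hcs : RCLike.re ⟪ψ, H₀ ψ⟫ ≤ ‖ψ‖ * ‖H₀ ψ‖ := by
    calc RCLike.re ⟪ψ, H₀ ψ⟫ ≤ ‖⟪ψ, H₀ ψ⟫‖ := RCLike.re_le_norm _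
      _ ≤ ‖ψ‖ * ‖H₀ ψ‖ := norm_inner_le_norm _ _
  have hbound : ‖H₁ ψ‖ ≤ C₁ * ‖S ψ‖ := by
    rw [happ, hC₁]
    exact (H₁ * Ring.inverse S).le_opNorm (S ψ)
  exact stmt_4_arith _ _ _ _ _ _ _ (norm_nonneg _) (norm_nonneg _)
    hδ.1 hC₂pos (hs2 ▸ hcs) (hs2 ▸ hb2) hC₂ hbound
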